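/- Let σ > 0 and let μ be the Gaussian measure on ℝ with mean 0 and variance σ². Then for every w ≤ 0, √(2/π) · exp(−w²/(2σ²)) / (√(4 + w²/σ²) − w/σ) ≤ μ((−∞, w]) ≤ √(2/π) · exp(−w²/(2σ²)) / (√(2 + w²/σ²) − w/σ). (The sharper CDF bounds (4.5) derived from Abramowitz–Stegun 7.1.13.) -/

import Mathlib

open MeasureTheory ProbabilityTheory Set
open Filter Real

/-- The sharper CDF bounds (4.5), derived from Abramowitz–Stegun 7.1.13, for the
Gaussian measure on `ℝ` with mean `0` and variance `σ²`, evaluated at `w ≤ 0`. -/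
noncomputable def sgauss (t : ℝ) : ℝ := Real.exp (-(1/2) * t ^ 2)

noncomputable def gtail (x : ℝ) : ℝ := ∫ t in Set.Ioi x, sgauss t

lemma sgauss_cont : Continuous sgauss :=
  Real.continuous_exp.comp (by fun_prop)

lemma sgauss_integrable : Integrable sgauss := by
  have := integrable_exp_neg_mul_sq (by norm_num : (0:ℝ) < 1/2)
  refine this.congr ?_
  filter_upwards with t
  simp [sgauss]

lemma gtail_sub (x y : ℝ) (h : x ≤ y) :
    gtail x = (∫ t in x..y, sgauss t) + gtail y := by
  rw [intervalIntegral.integral_of_le h, gtail, gtail, ← Set.Ioc_union_Ioi_eq_Ioi h,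
    setIntegral_union (Set.Ioc_disjoint_Ioi le_rfl) measurableSet_Ioi
      sgauss_integrable.integrableOn sgauss_integrable.integrableOn]

lemma gtail_eq (x : ℝ) : gtail x = gtail 0 - ∫ t in (0:ℝ)..x, sgauss t := by
  rcases le_total 0 x with h | h
  · rw [gtail_sub 0 x h]; ring
  · rw [gtail_sub x 0 h, intervalIntegral.integral_symm]; ring

lemma gtail_hasDerivAt (x : ℝ) : HasDerivAt gtail (-(sgauss x)) x := by
  have h : HasDerivAt (fun u => ∫ t in (0:ℝ)..u, sgauss t) (sgauss x) x :=
    intervalIntegral.integral_hasDerivAt_right sgauss_integrable.intervalIntegrable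
      sgauss_integrable.aestronglyMeasurable.stronglyMeasurableAtFilter sgauss_cont.continuousAt
  have h2 := (hasDerivAt_const x (gtail 0)).sub h
  have h3 : gtail = (fun x => gtail 0) - fun u => ∫ t in (0:ℝ)..u, sgauss t := by
    funext y; rw [gtail_eq y]; rfl
  rw [h3]; exact h2.congr_deriv (zero_sub _)

lemma sqrt_sq_add_hasDerivAt (c x : ℝ) (hc : 0 < c) :
    HasDerivAt (fun y => Real.sqrt (y ^ 2 + c)) (x / Real.sqrt (x ^ 2 + c)) x := by
  have h1 : HasDerivAt (fun y : ℝ => y ^ 2 + c) (2 * x) x := by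
    simpa using (hasDerivAt_pow 2 x).add_const c
  have h0 : x ^ 2 + c ≠ 0 := by positivity
  have h2 := (Real.hasDerivAt_sqrt h0).comp x h1
  refine h2.congr_deriv ?_
  have hs : Real.sqrt (x ^ 2 + c) ≠ 0 := Real.sqrt_ne_zero'.2 (by positivity)
  field_simp

lemma sgauss_hasDerivAt (x : ℝ) : HasDerivAt sgauss (sgauss x * (-x)) x := by
  have hinner : HasDerivAt (fun y : ℝ => -(1/2) * y ^ 2) (-x) x := by
    have := (hasDerivAt_pow 2 x).const_mul (-(1/2) : ℝ)
    refine this.congr_deriv ?_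
    norm_num
    ring
  exact hinner.exp

lemma sgauss_pos (x : ℝ) : 0 < sgauss x := Real.exp_pos _

noncomputable def Fup (x : ℝ) : ℝ := (Real.sqrt (x ^ 2 + 2) - x) * sgauss x - gtail x

noncomputable def Flo (x : ℝ) : ℝ := gtail x - (Real.sqrt (x ^ 2 + 4) - x) / 2 * sgauss x

lemma Fup_hasDerivAt (x : ℝ) :
    HasDerivAt Fup ((x / Real.sqrt (x ^ 2 + 2) - x * Real.sqrt (x ^ 2 + 2) + x ^ 2) * sgauss x) x := by
  have hu : HasDerivAt (fun y => Real.sqrt (y ^ 2 + 2) - y) (x / Real.sqrt (x ^ 2 + 2) - 1) x :=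
    (sqrt_sq_add_hasDerivAt 2 x two_pos).sub (hasDerivAt_id x)
  have h := (hu.mul (sgauss_hasDerivAt x)).sub (gtail_hasDerivAt x)
  refine h.congr_deriv ?_
  ring

lemma Flo_hasDerivAt (x : ℝ) :
    HasDerivAt Flo (-((1 + (x / Real.sqrt (x ^ 2 + 4) - 1) / 2
      - x * (Real.sqrt (x ^ 2 + 4) - x) / 2) * sgauss x)) x := by
  have hv : HasDerivAt (fun y => (Real.sqrt (y ^ 2 + 4) - y) / 2)
      ((x / Real.sqrt (x ^ 2 + 4) - 1) / 2) x :=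
    ((sqrt_sq_add_hasDerivAt 4 x four_pos).sub (hasDerivAt_id x)).div_const 2
  have h := (gtail_hasDerivAt x).sub (hv.mul (sgauss_hasDerivAt x))
  refine h.congr_deriv ?_
  ring

lemma Fup_deriv_nonpos {x : ℝ} (hx : 0 ≤ x) :
    (x / Real.sqrt (x ^ 2 + 2) - x * Real.sqrt (x ^ 2 + 2) + x ^ 2) * sgauss x ≤ 0 := by
  set s := Real.sqrt (x ^ 2 + 2) with hsdef
  have hspos : 0 < s := Real.sqrt_pos.2 (by positivity)
  have hs2 : s ^ 2 = x ^ 2 + 2 := Real.sq_sqrt (by positivity)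
  have key : x * s ≤ x ^ 2 + 1 := by
    have h1 : (x * s) ^ 2 ≤ (x ^ 2 + 1) ^ 2 := by nlinarith [sq_nonneg x]
    have h2 := Real.sqrt_le_sqrt h1
    rwa [Real.sqrt_sq (by positivity), Real.sqrt_sq (by positivity)] at h2
  have hmain : x / s - x * s + x ^ 2 ≤ 0 := by
    have hxs : x / s * s = x := div_mul_cancel₀ x hspos.ne'
    have hs2x : x * s ^ 2 = x * (x ^ 2 + 2) := by rw [hs2]
    have h5 : (x / s - x * s + x ^ 2) * s ≤ 0 * s := by
      nlinarith [mul_le_mul_of_nonneg_left key hx]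
    exact le_of_mul_le_mul_right h5 hspos
  exact mul_nonpos_of_nonpos_of_nonneg hmain (sgauss_pos x).le

lemma Flo_deriv_nonpos {x : ℝ} (hx : 0 ≤ x) :
    -((1 + (x / Real.sqrt (x ^ 2 + 4) - 1) / 2
      - x * (Real.sqrt (x ^ 2 + 4) - x) / 2) * sgauss x) ≤ 0 := by
  set r := Real.sqrt (x ^ 2 + 4) with hrdef
  have hrpos : 0 < r := Real.sqrt_pos.2 (by positivity)
  have hr2 : r ^ 2 = x ^ 2 + 4 := Real.sq_sqrt (by positivity)
  have key : x * (x ^ 2 + 3) ≤ r * (1 + x ^ 2) := by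
    have h1 : (x * (x ^ 2 + 3)) ^ 2 ≤ (r * (1 + x ^ 2)) ^ 2 := by nlinarith [sq_nonneg x]
    have h2 := Real.sqrt_le_sqrt h1
    rwa [Real.sqrt_sq (by positivity), Real.sqrt_sq (by positivity)] at h2
  have hmain : 0 ≤ 1 + (x / r - 1) / 2 - x * (r - x) / 2 := by
    have hxr : x / r * r = x := div_mul_cancel₀ x hrpos.ne'
    have hr2x : x * r ^ 2 = x * (x ^ 2 + 4) := by rw [hr2]
    have h5 : 0 * r ≤ (1 + (x / r - 1) / 2 - x * (r - x) / 2) * r := by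
      nlinarith [key]
    exact le_of_mul_le_mul_right h5 hrpos
  rw [neg_nonpos]
  exact mul_nonneg hmain (sgauss_pos x).le

lemma Fup_anti : AntitoneOn Fup (Set.Ici 0) := by
  refine antitoneOn_of_deriv_nonpos (convex_Ici 0)
    (fun x _ => (Fup_hasDerivAt x).continuousAt.continuousWithinAt)
    (fun x hx => (Fup_hasDerivAt x).differentiableAt.differentiableWithinAt)
    (fun x hx => ?_)
  rw [(Fup_hasDerivAt x).deriv]
  rw [interior_Ici] at hx
  exact Fup_deriv_nonpos (le_of_lt hx)

lemma Flo_anti : AntitoneOn Flo (Set.Ici 0) := by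
  refine antitoneOn_of_deriv_nonpos (convex_Ici 0)
    (fun x _ => (Flo_hasDerivAt x).continuousAt.continuousWithinAt)
    (fun x hx => (Flo_hasDerivAt x).differentiableAt.differentiableWithinAt)
    (fun x hx => ?_)
  rw [(Flo_hasDerivAt x).deriv]
  rw [interior_Ici] at hx
  exact Flo_deriv_nonpos (le_of_lt hx)

lemma sgauss_tendsto : Filter.Tendsto sgauss Filter.atTop (nhds 0) := by
  have h1 : Filter.Tendsto (fun x : ℝ => (1/2) * x ^ 2) Filter.atTop Filter.atTop := by
    exact (tendsto_pow_atTop two_ne_zero).const_mul_atTop (by norm_num)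
  have := Real.tendsto_exp_neg_atTop_nhds_zero.comp h1
  refine this.congr fun x => ?_
  simp [sgauss, Function.comp]

lemma gtail_nonneg (x : ℝ) : 0 ≤ gtail x :=
  setIntegral_nonneg measurableSet_Ioi fun t _ => (sgauss_pos t).le

lemma id_mul_sgauss_integrable : Integrable (fun t : ℝ => t * sgauss t) := by
  have hg : Integrable (fun t : ℝ => Real.exp (-(1/4) * t ^ 2)) :=
    integrable_exp_neg_mul_sq (by norm_num)
  have hbdd : ∀ t : ℝ, ‖t * Real.exp (-(1/4) * t ^ 2)‖ ≤ 4 := by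
    intro t
    rw [Real.norm_eq_abs, abs_mul, Real.abs_exp]
    have h1 : |t| ≤ 4 * Real.exp ((1/4) * t ^ 2) := by
      have h2 : 1 + (1/4) * t ^ 2 ≤ Real.exp ((1/4) * t ^ 2) := by
        have := Real.add_one_le_exp ((1/4) * t ^ 2)
        linarith
      nlinarith [sq_nonneg (|t| - 2), sq_abs t, abs_nonneg t]
    calc |t| * Real.exp (-(1/4) * t ^ 2)
        ≤ (4 * Real.exp ((1/4) * t ^ 2)) * Real.exp (-(1/4) * t ^ 2) :=
          mul_le_mul_of_nonneg_right h1 (Real.exp_pos _).le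
      _ = 4 := by rw [mul_assoc, ← Real.exp_add]; norm_num
  have hmeas : AEStronglyMeasurable (fun t : ℝ => t * Real.exp (-(1/4) * t ^ 2)) volume :=
    (continuous_id.mul (Real.continuous_exp.comp (by fun_prop))).aestronglyMeasurable
  have h2 := hg.bdd_mul hmeas (Filter.Eventually.of_forall hbdd)
  refine h2.congr ?_
  filter_upwards with t
  rw [mul_assoc, ← Real.exp_add, sgauss]
  congr 1
  ring

lemma gtail_le (x : ℝ) (hx : 1 ≤ x) : gtail x ≤ sgauss x := by
  have hint : ∫ t in Set.Ioi x, t * sgauss t = sgauss x := by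
    have h := integral_Ioi_of_hasDerivAt_of_tendsto
      (f := fun t => -(sgauss t)) (f' := fun t => t * sgauss t) (a := x)
      (m := 0) ?_ ?_ ?_ ?_
    · rw [h]; ring
    · exact ((sgauss_hasDerivAt x).neg.continuousAt.continuousWithinAt)
    · intro t _
      have := (sgauss_hasDerivAt t).neg
      refine this.congr_deriv ?_
      ring
    · exact id_mul_sgauss_integrable.integrableOn
    · have := sgauss_tendsto.neg
      simpa using this
  rw [← hint]
  refine setIntegral_mono_on sgauss_integrable.integrableOn
    id_mul_sgauss_integrable.integrableOn measurableSet_Ioi fun t ht => ?_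
  have h1 : 1 ≤ t := le_trans hx (le_of_lt ht)
  nlinarith [sgauss_pos t]

lemma gtail_tendsto : Filter.Tendsto gtail Filter.atTop (nhds 0) := by
  refine tendsto_of_tendsto_of_tendsto_of_le_of_le' tendsto_const_nhds sgauss_tendsto
    (Filter.Eventually.of_forall fun x => gtail_nonneg x) ?_
  filter_upwards [Filter.eventually_ge_atTop (1:ℝ)] with x hx
  exact gtail_le x hx

lemma sqrt_sub_le_two {x : ℝ} (hx : 0 ≤ x) : Real.sqrt (x ^ 2 + 2) - x ≤ 2 := by
  have h : Real.sqrt (x ^ 2 + 2) ≤ x + 2 := by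
    rw [show x ^ 2 + 2 = (x + 2) ^ 2 - (4 * x + 2) by ring]
    calc Real.sqrt ((x + 2) ^ 2 - (4 * x + 2)) ≤ Real.sqrt ((x + 2) ^ 2) :=
      Real.sqrt_le_sqrt (by nlinarith)
    _ = x + 2 := Real.sqrt_sq (by linarith)
  linarith

lemma sqrt_sub_nonneg' {x c : ℝ} (hx : 0 ≤ x) (hc : 0 ≤ c) :
    0 ≤ Real.sqrt (x ^ 2 + c) - x := by
  have : x ≤ Real.sqrt (x ^ 2 + c) := by
    rw [show x = Real.sqrt (x ^ 2) by rw [Real.sqrt_sq hx]]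
    exact Real.sqrt_le_sqrt (by nlinarith [Real.sq_sqrt (sq_nonneg x), Real.sqrt_sq hx])
  linarith

lemma Fup_tendsto : Filter.Tendsto Fup Filter.atTop (nhds 0) := by
  have h1 : Filter.Tendsto (fun x => (Real.sqrt (x ^ 2 + 2) - x) * sgauss x)
      Filter.atTop (nhds 0) := by
    refine tendsto_of_tendsto_of_tendsto_of_le_of_le' tendsto_const_nhds
      (by simpa using sgauss_tendsto.const_mul 2) ?_ ?_
    · filter_upwards [Filter.eventually_ge_atTop (0:ℝ)] with x hx
      exact mul_nonneg (sqrt_sub_nonneg' hx (by norm_num)) (sgauss_pos x).le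
    · filter_upwards [Filter.eventually_ge_atTop (0:ℝ)] with x hx
      exact mul_le_mul_of_nonneg_right (sqrt_sub_le_two hx) (sgauss_pos x).le
  have := h1.sub gtail_tendsto
  rw [sub_zero] at this; exact this

lemma sqrt4_sub_le_two {x : ℝ} (hx : 0 ≤ x) : Real.sqrt (x ^ 2 + 4) - x ≤ 2 := by
  have h : Real.sqrt (x ^ 2 + 4) ≤ x + 2 := by
    calc Real.sqrt (x ^ 2 + 4) ≤ Real.sqrt ((x + 2) ^ 2) := Real.sqrt_le_sqrt (by nlinarith)
    _ = x + 2 := Real.sqrt_sq (by linarith)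
  linarith

lemma Flo_tendsto : Filter.Tendsto Flo Filter.atTop (nhds 0) := by
  have h1 : Filter.Tendsto (fun x => (Real.sqrt (x ^ 2 + 4) - x) / 2 * sgauss x)
      Filter.atTop (nhds 0) := by
    refine tendsto_of_tendsto_of_tendsto_of_le_of_le' tendsto_const_nhds sgauss_tendsto ?_ ?_
    · filter_upwards [Filter.eventually_ge_atTop (0:ℝ)] with x hx
      exact mul_nonneg (by linarith [sqrt_sub_nonneg' hx (by norm_num : (0:ℝ) ≤ 4)])
        (sgauss_pos x).le
    · filter_upwards [Filter.eventually_ge_atTop (0:ℝ)] with x hx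
      have := sqrt4_sub_le_two hx
      nlinarith [sgauss_pos x]
  have := gtail_tendsto.sub h1
  rw [sub_zero] at this; exact this

lemma Fup_nonneg {x : ℝ} (hx : 0 ≤ x) : 0 ≤ Fup x := by
  refine le_of_tendsto Fup_tendsto ?_
  filter_upwards [Filter.eventually_ge_atTop x, Filter.eventually_ge_atTop (0:ℝ)] with y hy hy0
  exact Fup_anti hx hy0 hy

lemma Flo_nonneg {x : ℝ} (hx : 0 ≤ x) : 0 ≤ Flo x := by
  refine le_of_tendsto Flo_tendsto ?_
  filter_upwards [Filter.eventually_ge_atTop x, Filter.eventually_ge_atTop (0:ℝ)] with y hy hy0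
  exact Flo_anti hx hy0 hy

lemma gtail_upper {x : ℝ} (hx : 0 ≤ x) :
    gtail x ≤ (Real.sqrt (x ^ 2 + 2) - x) * sgauss x := by
  have := Fup_nonneg hx; rw [Fup] at this; linarith

lemma gtail_lower {x : ℝ} (hx : 0 ≤ x) :
    (Real.sqrt (x ^ 2 + 4) - x) / 2 * sgauss x ≤ gtail x := by
  have := Flo_nonneg hx; rw [Flo] at this; linarith

lemma sqrt_two_div_pi_eq : Real.sqrt (2 / Real.pi) = 2 * (Real.sqrt (2 * Real.pi))⁻¹ := by
  have hπ : 0 < Real.pi := Real.pi_pos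
  have hS : 0 < Real.sqrt (2 * Real.pi) := Real.sqrt_pos.2 (by positivity)
  have h4 : Real.sqrt (2 / Real.pi) * Real.sqrt (2 * Real.pi) = 2 := by
    rw [← Real.sqrt_mul (by positivity)]
    rw [show 2 / Real.pi * (2 * Real.pi) = 4 by field_simp; ring]
    rw [show (4:ℝ) = 2 ^ 2 by norm_num, Real.sqrt_sq (by norm_num)]
  field_simp at h4 ⊢
  linarith [h4]

theorem sharper_cdf_bounds (σ : ℝ) (hσ : 0 < σ) (w : ℝ) (hw : w ≤ 0) :
    Real.sqrt (2 / Real.pi) * Real.exp (-w ^ 2 / (2 * σ ^ 2)) /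
        (Real.sqrt (4 + w ^ 2 / σ ^ 2) - w / σ) ≤
      ((gaussianReal 0 ⟨σ ^ 2, sq_nonneg σ⟩) (Set.Iic w)).toReal ∧
    ((gaussianReal 0 ⟨σ ^ 2, sq_nonneg σ⟩) (Set.Iic w)).toReal ≤
      Real.sqrt (2 / Real.pi) * Real.exp (-w ^ 2 / (2 * σ ^ 2)) /
        (Real.sqrt (2 + w ^ 2 / σ ^ 2) - w / σ) := by
  have hπ : 0 < Real.pi := Real.pi_pos
  have hσ' : σ ≠ 0 := hσ.ne'
  set vv : NNReal := ⟨σ ^ 2, sq_nonneg σ⟩ with hvdef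
  have hv0 : vv ≠ 0 := by
    intro h
    have : (vv : ℝ) = 0 := by rw [h]; rfl
    have : σ ^ 2 = 0 := this
    exact hσ' (by nlinarith)
  set b : ℝ := σ⁻¹ * (-w) with hbdef
  have hb0 : 0 ≤ b := mul_nonneg (inv_nonneg.2 hσ.le) (neg_nonneg.2 hw)
  have hbw : w / σ = -b := by rw [hbdef]; ring
  have hbw2 : w ^ 2 / σ ^ 2 = b ^ 2 := by rw [hbdef]; ring
  have hE : Real.exp (-w ^ 2 / (2 * σ ^ 2)) = sgauss b := by
    rw [sgauss]
    congr 1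
    rw [hbdef]
    field_simp
  -- measure computation
  have hmeas : ((gaussianReal 0 vv) (Set.Iic w)).toReal
      = (Real.sqrt (2 * Real.pi))⁻¹ * gtail b := by
    rw [gaussianReal_apply_eq_integral 0 hv0,
      ENNReal.toReal_ofReal (setIntegral_nonneg measurableSet_Iic
        fun t _ => gaussianPDFReal_nonneg 0 vv t)]
    have hpdf : ∀ t : ℝ, gaussianPDFReal 0 vv t
        = (Real.sqrt (2 * Real.pi) * σ)⁻¹ * sgauss (σ⁻¹ * (-t)) := by
      intro t
      rw [gaussianPDFReal, sgauss]
      have hcv : (vv : ℝ) = σ ^ 2 := rfl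
      rw [hcv]
      congr 1
      · rw [show 2 * Real.pi * σ ^ 2 = (2 * Real.pi) * σ ^ 2 by ring,
          Real.sqrt_mul (by positivity), Real.sqrt_sq hσ.le]
      · congr 1
        field_simp
        ring
    simp_rw [hpdf]
    rw [integral_const_mul]
    have hsub : ∫ t in Set.Iic w, sgauss (σ⁻¹ * (-t)) = σ * gtail b := by
      rw [integral_comp_neg_Iic w (fun u => sgauss (σ⁻¹ * u))]
      rw [integral_comp_mul_left_Ioi sgauss (-w) (inv_pos.2 hσ)]
      rw [gtail, hbdef]
      simp [smul_eq_mul]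
    rw [hsub, mul_inv]
    field_simp
  have hSpos : 0 < Real.sqrt (2 * Real.pi) := Real.sqrt_pos.2 (by positivity)
  rw [hmeas, hbw, hbw2, hE]
  have hQ2 : Real.sqrt (b ^ 2 + 2) ^ 2 = b ^ 2 + 2 := Real.sq_sqrt (by positivity)
  have hQ4 : Real.sqrt (b ^ 2 + 4) ^ 2 = b ^ 2 + 4 := Real.sq_sqrt (by positivity)
  have hQ2pos : 0 < Real.sqrt (b ^ 2 + 2) := Real.sqrt_pos.2 (by positivity)
  have hQ4pos : 0 < Real.sqrt (b ^ 2 + 4) := Real.sqrt_pos.2 (by positivity)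
  have hden2 : 0 < Real.sqrt (b ^ 2 + 2) + b := by linarith
  have hden4 : 0 < Real.sqrt (b ^ 2 + 4) + b := by linarith
  rw [show (4 : ℝ) + b ^ 2 = b ^ 2 + 4 by ring, show (2 : ℝ) + b ^ 2 = b ^ 2 + 2 by ring,
    ]
  simp only [sub_neg_eq_add]
  have hb2 : σ⁻¹ ^ 2 * w ^ 2 = b ^ 2 := by rw [hbdef]; ring
  constructor
  · have hlow := gtail_lower hb0
    have heq : Real.sqrt (2 / Real.pi) * sgauss b / (Real.sqrt (b ^ 2 + 4) + b)
        = (Real.sqrt (2 * Real.pi))⁻¹ * ((Real.sqrt (b ^ 2 + 4) - b) / 2 * sgauss b) := by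
      rw [sqrt_two_div_pi_eq]
      rw [div_eq_iff hden4.ne']
      field_simp
      linear_combination sgauss b * hb2
        - sgauss b * hQ4
    rw [heq]
    exact mul_le_mul_of_nonneg_left hlow (inv_nonneg.2 hSpos.le)
  · have hup := gtail_upper hb0
    have heq : Real.sqrt (2 / Real.pi) * sgauss b / (Real.sqrt (b ^ 2 + 2) + b)
        = (Real.sqrt (2 * Real.pi))⁻¹ * ((Real.sqrt (b ^ 2 + 2) - b) * sgauss b) := by
      rw [sqrt_two_div_pi_eq]
      rw [div_eq_iff hden2.ne']
      field_simp
      linear_combination sgauss b * hb2 - sgauss b * hQ2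
    rw [heq]
    exact mul_le_mul_of_nonneg_left hup (inv_nonneg.2 hSpos.le)
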